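/- Let f : ℝ^n → ℝ be L-smooth, let φ : ℝ^n → (−∞,∞] be proper, closed, and convex, let M ∈ ℝ^{n×n} be symmetric positive semidefinite with operator norm ‖M‖ ≤ M̄, and let ψ := f + φ. Fix x ∈ ℝ^n and α ∈ (0, 1] with α(L + M̄) < 1, and define ψ_x(y) := ψ(y) + ½⟨y − x, M(y − x)⟩. Then the proximal point x̄ := argmin_y (ψ_x(y) + (1/(2α))‖y − x‖²) is well defined (the objective being strongly convex since 1/α > L + M̄) and satisfies ‖x̄ − x‖ ≥ (1 − (L + M̄)α)·‖F_nat^α(x)‖, where F_nat^α(x) := x − prox_{αφ}(x − α∇f(x)). -/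

import Mathlib

open scoped RealInnerProductSpace

section prox_aux
variable {n : ℕ}
lemma lineDeriv' (f : EuclideanSpace ℝ (Fin n) → ℝ) (f' : EuclideanSpace ℝ (Fin n) → EuclideanSpace ℝ (Fin n))
    (hf : ∀ y, HasGradientAt f (f' y) y) (x d : EuclideanSpace ℝ (Fin n)) (t : ℝ) :
    HasDerivAt (fun s : ℝ => f (x + s • d)) ⟪f' (x + t • d), d⟫ t := by
  have h1 : HasDerivAt (fun s : ℝ => x + s • d) d t := by
    simpa using ((hasDerivAt_id t).smul_const d).const_add x
  have h2 := (hf (x + t • d)).hasFDerivAt.comp_hasDerivAt t h1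
  exact h2

lemma descent_lemma (f : EuclideanSpace ℝ (Fin n) → ℝ) (f' : EuclideanSpace ℝ (Fin n) → EuclideanSpace ℝ (Fin n))
    (hf : ∀ y, HasGradientAt f (f' y) y) (L : ℝ)
    (hLip : ∀ y z, ‖f' y - f' z‖ ≤ L * ‖y - z‖) (x y : EuclideanSpace ℝ (Fin n)) :
    |f y - f x - ⟪f' x, y - x⟫| ≤ L / 2 * ‖y - x‖ ^ 2 := by
  set d := y - x with hd
  have key : ∀ (σ : ℝ), σ = 1 ∨ σ = -1 →
      -(L / 2 * ‖d‖ ^ 2) ≤ σ * (f y - f x - ⟪f' x, d⟫) := by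
    intro σ hσ
    -- h s = σ*(f(x+s•d) - s*⟪f' x,d⟫) + L/2 * s^2 * ‖d‖^2 is monotone on [0,1]
    set h : ℝ → ℝ := fun s => σ * (f (x + s • d) - s * ⟪f' x, d⟫) + L / 2 * s ^ 2 * ‖d‖ ^ 2 with hh
    have hderiv : ∀ s : ℝ, HasDerivAt h
        (σ * (⟪f' (x + s • d), d⟫ - ⟪f' x, d⟫) + L / 2 * (2 * s) * ‖d‖ ^ 2) s := by
      intro s
      have h1 := lineDeriv' f f' hf x d s
      have h2 : HasDerivAt (fun s : ℝ => f (x + s • d) - s * ⟪f' x, d⟫)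
          (⟪f' (x + s • d), d⟫ - ⟪f' x, d⟫) s := by
        exact h1.sub (by simpa using (hasDerivAt_id s).mul_const ⟪f' x, d⟫)
      have h3 : HasDerivAt (fun s : ℝ => L / 2 * s ^ 2 * ‖d‖ ^ 2) (L / 2 * (2 * s) * ‖d‖ ^ 2) s := by
        have := ((hasDerivAt_pow 2 s).const_mul (L / 2)).mul_const (‖d‖ ^ 2)
        simpa [mul_comm, mul_assoc, mul_left_comm] using this
      exact (h2.const_mul σ).add h3
    have hmono : MonotoneOn h (Set.Icc (0 : ℝ) 1) := by
      apply monotoneOn_of_deriv_nonneg (convex_Icc 0 1)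
      · exact fun s _ => (hderiv s).continuousAt.continuousWithinAt
      · intro s hs
        exact (hderiv s).differentiableAt.differentiableWithinAt
      · intro s hs
        rw [interior_Icc] at hs
        rw [(hderiv s).deriv]
        have hb : |⟪f' (x + s • d) - f' x, d⟫| ≤ L * s * ‖d‖ ^ 2 := by
          calc |⟪f' (x + s • d) - f' x, d⟫| ≤ ‖f' (x + s • d) - f' x‖ * ‖d‖ :=
                abs_real_inner_le_norm _ _
            _ ≤ (L * ‖(x + s • d) - x‖) * ‖d‖ := by
                have := hLip (x + s • d) x
                exact mul_le_mul_of_nonneg_right this (norm_nonneg d)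
            _ = L * s * ‖d‖ ^ 2 := by
                have : ‖(x + s • d) - x‖ = s * ‖d‖ := by
                  simp [norm_smul, abs_of_pos hs.1]
                rw [this]; ring
        have hinner : ⟪f' (x + s • d), d⟫ - ⟪f' x, d⟫ = ⟪f' (x + s • d) - f' x, d⟫ := by
          rw [inner_sub_left]
        rw [hinner]
        rcases hσ with rfl | rfl
        · nlinarith [abs_le.1 hb, hs.1, hs.2]
        · nlinarith [abs_le.1 hb, hs.1, hs.2]
    have h01 := hmono (Set.left_mem_Icc.2 zero_le_one) (Set.right_mem_Icc.2 zero_le_one) zero_le_one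
    simp only [hh] at h01
    have e1 : x + (1 : ℝ) • d = y := by simp [hd]
    have e0 : x + (0 : ℝ) • d = x := by simp
    rw [e1, e0] at h01
    rcases hσ with rfl | rfl <;> [skip; skip]
    · ring_nf at h01 ⊢
      linarith [h01]
    · ring_nf at h01 ⊢
      linarith [h01]
  have h1 := key 1 (Or.inl rfl)
  have h2 := key (-1) (Or.inr rfl)
  rw [abs_le]; constructor <;> nlinarith

lemma prox_var_ineq (α : ℝ) (hα : 0 < α) (D : Set (EuclideanSpace ℝ (Fin n)))
    (φ : EuclideanSpace ℝ (Fin n) → ℝ) (hφconv : ConvexOn ℝ D φ)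
    (z a : EuclideanSpace ℝ (Fin n)) (ha : a ∈ D)
    (hmin : ∀ u ∈ D, α * φ a + ‖z - a‖ ^ 2 / 2 ≤ α * φ u + ‖z - u‖ ^ 2 / 2) :
    ∀ u ∈ D, ⟪z - a, u - a⟫ ≤ α * (φ u - φ a) := by
  intro u hu
  set d := u - a with hd
  have key : ∀ t : ℝ, 0 < t → t ≤ 1 → ⟪z - a, d⟫ ≤ α * (φ u - φ a) + t * (‖d‖ ^ 2 / 2) := by
    intro t ht0 ht1
    have hmem : (1 - t) • a + t • u ∈ D :=
      hφconv.1 ha hu (by linarith) (le_of_lt ht0) (by ring)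
    have hφle : φ ((1 - t) • a + t • u) ≤ (1 - t) * φ a + t * φ u :=
      hφconv.2 ha hu (by linarith) (le_of_lt ht0) (by ring)
    have heq : (1 - t) • a + t • u = a + t • d := by
      rw [hd]; module
    have hnorm : ‖z - (a + t • d)‖ ^ 2 = ‖z - a‖ ^ 2 - 2 * t * ⟪z - a, d⟫ + t ^ 2 * ‖d‖ ^ 2 := by
      have h1 : z - (a + t • d) = (z - a) - t • d := by abel
      rw [h1, norm_sub_sq_real, real_inner_smul_right, norm_smul]
      simp [mul_pow, sq_abs]
      ring
    have := hmin _ hmem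
    rw [heq] at this hφle
    rw [hnorm] at this
    have hαφ : α * φ (a + t • d) ≤ α * ((1 - t) * φ a + t * φ u) :=
      mul_le_mul_of_nonneg_left hφle (le_of_lt hα)
    have h2 : α * φ a + ‖z - a‖ ^ 2 / 2 ≤ α * ((1 - t) * φ a + t * φ u)
        + (‖z - a‖ ^ 2 - 2 * t * ⟪z - a, d⟫ + t ^ 2 * ‖d‖ ^ 2) / 2 := by linarith
    have h3 : t * ⟪z - a, d⟫ ≤ t * (α * (φ u - φ a)) + t ^ 2 * (‖d‖ ^ 2 / 2) := by nlinarith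
    have h4 := (mul_le_mul_iff_right₀ ht0).1 (by
      calc t * ⟪z - a, d⟫ ≤ t * (α * (φ u - φ a)) + t ^ 2 * (‖d‖ ^ 2 / 2) := h3
        _ = t * (α * (φ u - φ a) + t * (‖d‖ ^ 2 / 2)) := by ring)
    exact h4
  refine le_of_forall_pos_le_add fun ε hε => ?_
  have hpos : (0:ℝ) < ‖d‖ ^ 2 / 2 + 1 := by positivity
  set t := min 1 (ε / (‖d‖ ^ 2 / 2 + 1)) with htdef
  have ht0 : 0 < t := lt_min one_pos (div_pos hε hpos)
  have ht1 : t ≤ 1 := min_le_left _ _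
  have := key t ht0 ht1
  have hbound : t * (‖d‖ ^ 2 / 2) ≤ ε := by
    have h1 : t ≤ ε / (‖d‖ ^ 2 / 2 + 1) := min_le_right _ _
    have h2 : t * (‖d‖ ^ 2 / 2) ≤ (ε / (‖d‖ ^ 2 / 2 + 1)) * (‖d‖ ^ 2 / 2) :=
      mul_le_mul_of_nonneg_right h1 (by positivity)
    calc t * (‖d‖ ^ 2 / 2) ≤ (ε / (‖d‖ ^ 2 / 2 + 1)) * (‖d‖ ^ 2 / 2) := h2
      _ ≤ ε := by
        rw [div_mul_eq_mul_div, div_le_iff₀ hpos]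
        nlinarith [hε.le]
  linarith

lemma le_of_small_t (c b B : ℝ) (h : ∀ t : ℝ, 0 < t → t ≤ 1 → c ≤ b + t * B) : c ≤ b := by
  refine le_of_forall_pos_le_add fun ε hε => ?_
  have hpos : (0:ℝ) < |B| + 1 := by positivity
  set t := min 1 (ε / (|B| + 1)) with ht
  have ht0 : 0 < t := lt_min one_pos (div_pos hε hpos)
  have ht1 : t ≤ 1 := min_le_left _ _
  have := h t ht0 ht1
  have : t * B ≤ ε := by
    calc t * B ≤ t * |B| := mul_le_mul_of_nonneg_left (le_abs_self B) ht0.le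
      _ ≤ (ε / (|B| + 1)) * |B| := mul_le_mul_of_nonneg_right (min_le_right _ _) (abs_nonneg B)
      _ ≤ ε := by rw [div_mul_eq_mul_div, div_le_iff₀ hpos]; nlinarith [hε.le, abs_nonneg B]
  linarith [h t ht0 ht1]

lemma minimizer_var_ineq (L Mbar α : ℝ) (f : EuclideanSpace ℝ (Fin n) → ℝ)
    (f' : EuclideanSpace ℝ (Fin n) → EuclideanSpace ℝ (Fin n))
    (hf : ∀ y, HasGradientAt f (f' y) y)
    (hLip : ∀ y z, ‖f' y - f' z‖ ≤ L * ‖y - z‖)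
    (D : Set (EuclideanSpace ℝ (Fin n))) (φ : EuclideanSpace ℝ (Fin n) → ℝ)
    (hφconv : ConvexOn ℝ D φ)
    (M : EuclideanSpace ℝ (Fin n) →L[ℝ] EuclideanSpace ℝ (Fin n))
    (hMsym : IsSelfAdjoint M) (hMnorm : ‖M‖ ≤ Mbar)
    (x : EuclideanSpace ℝ (Fin n)) (hα0 : 0 < α)
    (xbar : EuclideanSpace ℝ (Fin n)) (hxD : xbar ∈ D)
    (hmin : IsMinOn (fun y => f y + φ y + (1 / 2) * ⟪y - x, M (y - x)⟫
        + ‖y - x‖ ^ 2 / (2 * α)) D xbar) :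
    ∀ u ∈ D, φ xbar - φ u ≤ ⟪f' xbar + M (xbar - x) + (1 / α) • (xbar - x), u - xbar⟫ := by
  intro u hu
  set a := xbar - x with ha
  set d := u - xbar with hd
  set G := f' xbar + M a + (1 / α) • a with hG
  apply le_of_small_t _ _ ((L + Mbar + 1 / α) / 2 * ‖d‖ ^ 2)
  intro t ht0 ht1
  have hmem : xbar + t • d ∈ D := by
    have := hφconv.1 hxD hu (by linarith : (0:ℝ) ≤ 1 - t) ht0.le (by ring)
    have he : (1 - t) • xbar + t • u = xbar + t • d := by rw [hd]; module
    rwa [he] at this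
  have hφle : φ (xbar + t • d) ≤ (1 - t) * φ xbar + t * φ u := by
    have := hφconv.2 hxD hu (by linarith : (0:ℝ) ≤ 1 - t) ht0.le (by ring)
    have he : (1 - t) • xbar + t • u = xbar + t • d := by rw [hd]; module
    rwa [he] at this
  have hfle : f (xbar + t • d) ≤ f xbar + t * ⟪f' xbar, d⟫ + L / 2 * t ^ 2 * ‖d‖ ^ 2 := by
    have := descent_lemma f f' hf L hLip xbar (xbar + t • d)
    have he : xbar + t • d - xbar = t • d := by abel
    rw [he, real_inner_smul_right] at this
    have hn : ‖t • d‖ ^ 2 = t ^ 2 * ‖d‖ ^ 2 := by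
      rw [norm_smul]; simp [mul_pow, sq_abs]
    rw [hn] at this
    have := (abs_le.1 this).2
    nlinarith [this]
  have hMexp : ⟪xbar + t • d - x, M (xbar + t • d - x)⟫
      = ⟪a, M a⟫ + 2 * t * ⟪M a, d⟫ + t ^ 2 * ⟪M d, d⟫ := by
    have he : xbar + t • d - x = a + t • d := by rw [ha]; abel
    rw [he, map_add, map_smul, inner_add_left, inner_add_right, inner_add_right,
      real_inner_smul_left, real_inner_smul_right, real_inner_smul_left, real_inner_smul_right]
    have h1 : ⟪a, M a⟫ = ⟪M a, a⟫ := real_inner_comm _ _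
    have h2 : ⟪d, M a⟫ = ⟪M a, d⟫ := real_inner_comm _ _
    have h3 : ⟪a, M d⟫ = ⟪M a, d⟫ := by
      have := hMsym.isSymmetric a d
      simp only [ContinuousLinearMap.coe_coe] at this
      exact this.symm
    have h4 : ⟪d, M d⟫ = ⟪M d, d⟫ := real_inner_comm _ _
    rw [h1, h2, h3, h4]
    ring
  have hMdd : ⟪M d, d⟫ ≤ Mbar * ‖d‖ ^ 2 := by
    calc ⟪M d, d⟫ ≤ ‖M d‖ * ‖d‖ := real_inner_le_norm _ _
      _ ≤ (‖M‖ * ‖d‖) * ‖d‖ := mul_le_mul_of_nonneg_right (M.le_opNorm d) (norm_nonneg d)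
      _ ≤ Mbar * ‖d‖ ^ 2 := by nlinarith [norm_nonneg d, norm_nonneg (M d)]
  have hnexp : ‖xbar + t • d - x‖ ^ 2 = ‖a‖ ^ 2 + 2 * t * ⟪a, d⟫ + t ^ 2 * ‖d‖ ^ 2 := by
    have he : xbar + t • d - x = a + t • d := by rw [ha]; abel
    rw [he, norm_add_sq_real, real_inner_smul_right, norm_smul]
    simp [mul_pow, sq_abs]
    ring
  have hF := hmin hmem
  simp only [Set.mem_setOf_eq] at hF
  rw [hMexp, hnexp] at hF
  -- hF : F xbar ≤ F (xbar + t d) expanded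
  have hGd : ⟪G, d⟫ = ⟪f' xbar, d⟫ + ⟪M a, d⟫ + (1 / α) * ⟪a, d⟫ := by
    rw [hG, inner_add_left, inner_add_left, real_inner_smul_left]
  have hdiv : (‖a‖ ^ 2 + 2 * t * ⟪a, d⟫ + t ^ 2 * ‖d‖ ^ 2) / (2 * α)
      = ‖a‖ ^ 2 / (2 * α) + t * ((1 / α) * ⟪a, d⟫) + t ^ 2 * ((1 / α) * ‖d‖ ^ 2 / 2) := by
    field_simp
  have hstep : t * (φ xbar - φ u) ≤ t * ⟪G, d⟫ + t ^ 2 * ((L + Mbar + 1 / α) / 2 * ‖d‖ ^ 2) := by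
    rw [hGd]
    rw [hdiv] at hF
    have hMdd' : t ^ 2 / 2 * ⟪M d, d⟫ ≤ t ^ 2 / 2 * (Mbar * ‖d‖ ^ 2) :=
      mul_le_mul_of_nonneg_left hMdd (by positivity)
    linarith [hF, hfle, hφle, hMdd']
  have := (mul_le_mul_iff_right₀ ht0).1 (by
    calc t * (φ xbar - φ u) ≤ t * ⟪G, d⟫ + t ^ 2 * ((L + Mbar + 1 / α) / 2 * ‖d‖ ^ 2) := hstep
      _ = t * (⟪G, d⟫ + t * ((L + Mbar + 1 / α) / 2 * ‖d‖ ^ 2)) := by ring)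
  exact this

lemma sublevel_bound (κ B c r : ℝ) (hκ : 0 < κ) (hr : 0 ≤ r) (h : κ * r ^ 2 ≤ c + B * r) :
    r ≤ |B| / κ + Real.sqrt (|c| / κ) := by
  set b := |B| / κ with hb
  set a := |c| / κ with ha
  have ha0 : 0 ≤ a := div_nonneg (abs_nonneg c) hκ.le
  have hb0 : 0 ≤ b := div_nonneg (abs_nonneg B) hκ.le
  have h2 : r ^ 2 ≤ a + b * r := by
    have hκa : κ * a = |c| := by rw [ha]; field_simp
    have hκb : κ * b = |B| := by rw [hb]; field_simp
    have h3 : κ * r ^ 2 ≤ κ * a + κ * b * r := by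
      rw [hκa, hκb]
      have := mul_le_mul_of_nonneg_right (le_abs_self B) hr
      linarith [le_abs_self c, this]
    nlinarith [h3]
  by_contra hgt
  push_neg at hgt
  have hs0 : 0 ≤ Real.sqrt a := Real.sqrt_nonneg a
  have hsq : Real.sqrt a * Real.sqrt a = a := Real.mul_self_sqrt ha0
  nlinarith [hgt, h2, hs0, hsq, hb0, hr]

lemma quad_parallelogram {n : ℕ} (M : EuclideanSpace ℝ (Fin n) →L[ℝ] EuclideanSpace ℝ (Fin n))
    (a b : EuclideanSpace ℝ (Fin n)) :
    ⟪a + b, M (a + b)⟫ + ⟪a - b, M (a - b)⟫ = 2 * ⟪a, M a⟫ + 2 * ⟪b, M b⟫ := by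
  rw [map_add, map_sub, inner_add_left, inner_add_right, inner_add_right,
    inner_sub_left, inner_sub_right, inner_sub_right]
  ring


lemma min_unique {n : ℕ} (L Mbar α : ℝ) (f : EuclideanSpace ℝ (Fin n) → ℝ)
    (f' : EuclideanSpace ℝ (Fin n) → EuclideanSpace ℝ (Fin n))
    (hf : ∀ y, HasGradientAt f (f' y) y)
    (hLip : ∀ y z, ‖f' y - f' z‖ ≤ L * ‖y - z‖)
    (D : Set (EuclideanSpace ℝ (Fin n))) (φ : EuclideanSpace ℝ (Fin n) → ℝ)
    (hφconv : ConvexOn ℝ D φ)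
    (M : EuclideanSpace ℝ (Fin n) →L[ℝ] EuclideanSpace ℝ (Fin n))
    (hMpsd : ∀ y, 0 ≤ ⟪M y, y⟫)
    (x : EuclideanSpace ℝ (Fin n)) (hα0 : 0 < α) (hαL : α * L < 1)
    (y₁ y₂ : EuclideanSpace ℝ (Fin n)) (h1D : y₁ ∈ D) (h2D : y₂ ∈ D)
    (hmin1 : IsMinOn (fun y => f y + φ y + (1 / 2) * ⟪y - x, M (y - x)⟫
        + ‖y - x‖ ^ 2 / (2 * α)) D y₁)
    (hmin2 : IsMinOn (fun y => f y + φ y + (1 / 2) * ⟪y - x, M (y - x)⟫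
        + ‖y - x‖ ^ 2 / (2 * α)) D y₂) : y₁ = y₂ := by
  set F : EuclideanSpace ℝ (Fin n) → ℝ := fun y => f y + φ y + (1 / 2) * ⟪y - x, M (y - x)⟫
        + ‖y - x‖ ^ 2 / (2 * α) with hF
  set m := (1/2 : ℝ) • y₁ + (1/2 : ℝ) • y₂ with hm
  have hmD : m ∈ D := hφconv.1 h1D h2D (by norm_num) (by norm_num) (by norm_num)
  have hFm1 : F y₁ ≤ F m := hmin1 hmD
  have hFm2 : F y₂ ≤ F m := hmin2 hmD
  -- f part
  have h1m : y₁ - m = (1/2 : ℝ) • (y₁ - y₂) := by rw [hm]; module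
  have h2m : y₂ - m = -((1/2 : ℝ) • (y₁ - y₂)) := by rw [hm]; module
  have hfd1 := (abs_le.1 (descent_lemma f f' hf L hLip m y₁)).1
  have hfd2 := (abs_le.1 (descent_lemma f f' hf L hLip m y₂)).1
  rw [h1m] at hfd1
  rw [h2m] at hfd2
  have hnn : ‖(1/2 : ℝ) • (y₁ - y₂)‖ ^ 2 = (1/4) * ‖y₁ - y₂‖ ^ 2 := by
    rw [norm_smul, Real.norm_eq_abs, mul_pow, sq_abs]; norm_num
  rw [norm_neg] at hfd2
  rw [hnn] at hfd1 hfd2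
  rw [inner_neg_right] at hfd2
  -- sum of inner terms cancels
  have hfsum : 2 * f m ≤ f y₁ + f y₂ + L / 4 * ‖y₁ - y₂‖ ^ 2 := by linarith
  -- φ part
  have hφm : φ m ≤ (1/2) * φ y₁ + (1/2) * φ y₂ := by
    have h := hφconv.2 h1D h2D (le_of_lt one_half_pos) (le_of_lt one_half_pos)
      (by norm_num : (1:ℝ)/2 + 1/2 = 1)
    rw [hm]
    simpa only [smul_eq_mul] using h
  -- M part
  set a := y₁ - x with ha
  set b := y₂ - x with hb
  have hmx : m - x = (1/2 : ℝ) • (a + b) := by rw [hm, ha, hb]; module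
  have hMm : ⟪m - x, M (m - x)⟫
      = (1/4) * (2 * ⟪a, M a⟫ + 2 * ⟪b, M b⟫ - ⟪a - b, M (a - b)⟫) := by
    rw [hmx, map_smul, real_inner_smul_left, real_inner_smul_right, ← quad_parallelogram M a b]
    ring
  have hMpsd' : 0 ≤ ⟪a - b, M (a - b)⟫ := by
    rw [real_inner_comm]; exact hMpsd _
  -- norm part
  have hab : a - b = y₁ - y₂ := by rw [ha, hb]; abel
  have hpar : ‖a + b‖ ^ 2 = 2 * ‖a‖ ^ 2 + 2 * ‖b‖ ^ 2 - ‖y₁ - y₂‖ ^ 2 := by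
    have e1 := norm_add_sq_real a b
    have e2 := norm_sub_sq_real a b
    rw [← hab]
    linarith [e1, e2]
  have hnm : ‖m - x‖ ^ 2 = (1/4) * (2 * ‖a‖ ^ 2 + 2 * ‖b‖ ^ 2 - ‖y₁ - y₂‖ ^ 2) := by
    rw [hmx, norm_smul, Real.norm_eq_abs, mul_pow, sq_abs, hpar]
    norm_num
  -- combine
  have hcomb : F m ≤ (1/2) * F y₁ + (1/2) * F y₂ + (L / 8 - 1 / (8 * α)) * ‖y₁ - y₂‖ ^ 2 := by
    rw [hF]
    simp only
    rw [hMm, hnm]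
    have hdiv : (1/4 : ℝ) * (2 * ‖a‖ ^ 2 + 2 * ‖b‖ ^ 2 - ‖y₁ - y₂‖ ^ 2) / (2 * α)
        = (1/2) * (‖a‖ ^ 2 / (2 * α)) + (1/2) * (‖b‖ ^ 2 / (2 * α))
          - (1 / (8 * α)) * ‖y₁ - y₂‖ ^ 2 := by
      field_simp
      ring
    rw [hdiv]
    have h12 : ⟪y₁ - x, M (y₁ - x)⟫ = ⟪a, M a⟫ := by rw [ha]
    have h22 : ⟪y₂ - x, M (y₂ - x)⟫ = ⟪b, M b⟫ := by rw [hb]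
    have h13 : ‖y₁ - x‖ = ‖a‖ := by rw [ha]
    have h23 : ‖y₂ - x‖ = ‖b‖ := by rw [hb]
    rw [h12, h22, h13, h23]
    linarith [hfsum, hφm, hMpsd']
  clear_value F m a b
  clear hmin1 hmin2 hf hLip hφconv hMpsd hF hm hmD h1m h2m hfd1 hfd2 hnn hφm ha hb hmx hMm
    hMpsd' hab hpar hnm hfsum
  have hδ : ‖y₁ - y₂‖ ^ 2 ≤ 0 := by
    have hκ : 0 < 1 / (8 * α) - L / 8 := by
      have h8 : (0:ℝ) < 8 * α := by linarith
      have hlt : L / 8 < 1 / (8 * α) := by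
        rw [div_lt_div_iff₀ (by norm_num : (0:ℝ) < 8) h8]
        nlinarith [hαL, hα0]
      linarith
    nlinarith [hcomb, hFm1, hFm2, hκ, sq_nonneg ‖y₁ - y₂‖]
  have : ‖y₁ - y₂‖ = 0 := by nlinarith [norm_nonneg (y₁ - y₂)]
  rw [norm_eq_zero, sub_eq_zero] at this
  exact this

set_option maxHeartbeats 1000000 in
lemma min_exists {n : ℕ} (L α : ℝ) (f : EuclideanSpace ℝ (Fin n) → ℝ)
    (f' : EuclideanSpace ℝ (Fin n) → EuclideanSpace ℝ (Fin n))
    (hf : ∀ y, HasGradientAt f (f' y) y)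
    (hLip : ∀ y z, ‖f' y - f' z‖ ≤ L * ‖y - z‖)
    (D : Set (EuclideanSpace ℝ (Fin n))) (φ : EuclideanSpace ℝ (Fin n) → ℝ)
    (hD : D.Nonempty) (hφconv : ConvexOn ℝ D φ)
    (hφclosed : IsClosed {q : EuclideanSpace ℝ (Fin n) × ℝ | q.1 ∈ D ∧ φ q.1 ≤ q.2})
    (M : EuclideanSpace ℝ (Fin n) →L[ℝ] EuclideanSpace ℝ (Fin n))
    (hMpsd : ∀ y, 0 ≤ ⟪M y, y⟫)
    (x : EuclideanSpace ℝ (Fin n)) (hα0 : 0 < α) (hαL : α * L < 1) :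
    ∃ xbar ∈ D, IsMinOn (fun y => f y + φ y + (1 / 2) * ⟪y - x, M (y - x)⟫
        + ‖y - x‖ ^ 2 / (2 * α)) D xbar := by
  set F : EuclideanSpace ℝ (Fin n) → ℝ := fun y => f y + φ y + (1 / 2) * ⟪y - x, M (y - x)⟫
        + ‖y - x‖ ^ 2 / (2 * α) with hFdef
  obtain ⟨y₀, hy₀⟩ := hD
  set S : Set (EuclideanSpace ℝ (Fin n) × ℝ) := {q | q.1 ∈ D ∧ φ q.1 ≤ q.2} with hSdef
  -- separating functional
  have hpt : ((y₀, φ y₀ - 1) : EuclideanSpace ℝ (Fin n) × ℝ) ∉ S := by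
    intro h
    have := h.2
    simp only at this
    linarith
  obtain ⟨ℓ, u, hℓpt, hℓS⟩ :=
    geometric_hahn_banach_point_closed hφconv.convex_epigraph hφclosed hpt
  set β := ℓ (0, 1) with hβdef
  have hsplit : ∀ (y : EuclideanSpace ℝ (Fin n)) (t : ℝ), ℓ (y, t) = ℓ (y, 0) + t * β := by
    intro y t
    have he : ((y, t) : EuclideanSpace ℝ (Fin n) × ℝ)
        = (y, (0:ℝ)) + t • ((0 : EuclideanSpace ℝ (Fin n)), (1:ℝ)) := by
      ext <;> simp
    rw [he, map_add, map_smul, smul_eq_mul, hβdef]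
  have hβpos : 0 < β := by
    rcases lt_trichotomy β 0 with hneg | hzero | hpos
    · exfalso
      set t := max (φ y₀) ((u - ℓ (y₀, 0)) / β + 1) with htdef
      have hmem : ((y₀, t) : EuclideanSpace ℝ (Fin n) × ℝ) ∈ S := ⟨hy₀, le_max_left _ _⟩
      have h1 := hℓS _ hmem
      rw [hsplit] at h1
      have ht : (u - ℓ (y₀, 0)) / β + 1 ≤ t := le_max_right _ _
      have h2 : t * β ≤ ((u - ℓ (y₀, 0)) / β + 1) * β := mul_le_mul_of_nonpos_right ht hneg.le
      have h3 : ((u - ℓ (y₀, 0)) / β + 1) * β = (u - ℓ (y₀, 0)) + β := by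
        field_simp [hneg.ne]
      linarith
    · exfalso
      have h1 := hℓS (y₀, φ y₀) ⟨hy₀, le_refl _⟩
      rw [hsplit] at h1
      rw [hsplit] at hℓpt
      rw [hzero] at h1 hℓpt
      linarith
    · exact hpos
  have hminor : ∀ y ∈ D, u - ℓ (y, 0) ≤ β * φ y := by
    intro y hy
    have h1 := hℓS (y, φ y) ⟨hy, le_refl _⟩
    rw [hsplit] at h1
    linarith [h1, mul_comm (φ y) β]
  have hℓbd : ∀ y : EuclideanSpace ℝ (Fin n), |ℓ (y, 0)| ≤ ‖ℓ‖ * ‖y‖ := by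
    intro y
    have h1 : |ℓ (y, 0)| = ‖ℓ (y, 0)‖ := rfl
    rw [h1]
    calc ‖ℓ (y, 0)‖ ≤ ‖ℓ‖ * ‖((y, (0:ℝ)) : EuclideanSpace ℝ (Fin n) × ℝ)‖ := ℓ.le_opNorm _
      _ = ‖ℓ‖ * ‖y‖ := by
          congr 1
          rw [Prod.norm_def]
          simp
  -- lower bound on φ
  have hφlb : ∀ y ∈ D, (u - ‖ℓ‖ * (‖y - x‖ + ‖x‖)) / β ≤ φ y := by
    intro y hy
    rw [div_le_iff₀ hβpos]
    have h1 := hminor y hy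
    have h2 : ‖y‖ ≤ ‖y - x‖ + ‖x‖ := by
      calc ‖y‖ = ‖(y - x) + x‖ := by rw [sub_add_cancel]
        _ ≤ ‖y - x‖ + ‖x‖ := norm_add_le _ _
    have h3 : ℓ (y, 0) ≤ ‖ℓ‖ * (‖y - x‖ + ‖x‖) := by
      have := (abs_le.1 (hℓbd y)).2
      have h4 : ‖ℓ‖ * ‖y‖ ≤ ‖ℓ‖ * (‖y - x‖ + ‖x‖) := mul_le_mul_of_nonneg_left h2 (norm_nonneg ℓ)
      linarith
    have := h1
    rw [mul_comm β (φ y)] at this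
    linarith
  -- constants
  set κ := 1 / (2 * α) - L / 2 with hκdef
  have hκpos : 0 < κ := by
    rw [hκdef]
    have h2 : (0:ℝ) < 2 * α := by linarith
    have hlt : L / 2 < 1 / (2 * α) := by
      rw [div_lt_div_iff₀ (by norm_num : (0:ℝ) < 2) h2]
      nlinarith [hαL, hα0]
    linarith
  set B := ‖f' x‖ + ‖ℓ‖ / β with hBdef
  set C0 := f x + u / β - (‖ℓ‖ / β) * ‖x‖ with hC0def
  -- lower bound for F
  have hFlb : ∀ y ∈ D, C0 - B * ‖y - x‖ + κ * ‖y - x‖ ^ 2 ≤ F y := by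
    intro y hy
    have hφ := hφlb y hy
    have hdesc := (abs_le.1 (descent_lemma f f' hf L hLip x y)).1
    have hin : -(‖f' x‖ * ‖y - x‖) ≤ ⟪f' x, y - x⟫ := by
      have := (abs_le.1 (abs_real_inner_le_norm (f' x) (y - x))).1
      linarith
    have hM : 0 ≤ (1 / 2 : ℝ) * ⟪y - x, M (y - x)⟫ := by
      have := hMpsd (y - x)
      rw [real_inner_comm] at this
      linarith
    have hdivs : (u - ‖ℓ‖ * (‖y - x‖ + ‖x‖)) / β
        = u / β - (‖ℓ‖ / β) * ‖y - x‖ - (‖ℓ‖ / β) * ‖x‖ := by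
      field_simp
      ring
    rw [hdivs] at hφ
    have hnorm : ‖y - x‖ ^ 2 / (2 * α) = (1 / (2 * α)) * ‖y - x‖ ^ 2 := by ring
    rw [hFdef]
    simp only
    rw [hnorm]
    rw [hκdef, hBdef, hC0def]
    nlinarith [hφ, hdesc, hin, hM]
  set R := |B| / κ + Real.sqrt (|F y₀ - C0| / κ) with hRdef
  have hR : ∀ y ∈ D, F y ≤ F y₀ → ‖y - x‖ ≤ R := by
    intro y hy hFy
    apply sublevel_bound κ B (F y₀ - C0) _ hκpos (norm_nonneg _)
    have := hFlb y hy
    linarith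
  -- the product-space function
  set H : EuclideanSpace ℝ (Fin n) × ℝ → ℝ := fun q =>
    f q.1 + q.2 + (1 / 2) * ⟪q.1 - x, M (q.1 - x)⟫ + ‖q.1 - x‖ ^ 2 / (2 * α) with hHdef
  have hfc : Continuous f := by
    rw [continuous_iff_continuousAt]
    exact fun y => (hf y).hasFDerivAt.continuousAt
  have hHc : Continuous H := by
    apply Continuous.add
    apply Continuous.add
    apply Continuous.add
    · exact hfc.comp continuous_fst
    · exact continuous_snd
    · exact continuous_const.mul (Continuous.inner (continuous_fst.sub continuous_const)
        (M.continuous.comp (continuous_fst.sub continuous_const)))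
    · exact (((continuous_fst.sub continuous_const).norm.pow 2)).div_const _
  set H₀ := H (y₀, φ y₀) with hH₀def
  have hH₀F : H₀ = F y₀ := rfl
  set K := S ∩ {q | H q ≤ H₀} with hKdef
  have hK0 : ((y₀, φ y₀) : EuclideanSpace ℝ (Fin n) × ℝ) ∈ K :=
    ⟨⟨hy₀, le_refl _⟩, le_of_eq hH₀def.symm⟩
  have hKclosed : IsClosed K := hφclosed.inter (isClosed_le hHc continuous_const)
  -- membership facts
  have hKfacts : ∀ q ∈ K, q.1 ∈ D ∧ φ q.1 ≤ q.2 ∧ F q.1 ≤ H q := by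
    rintro ⟨y, t⟩ ⟨⟨hyD, hyφ⟩, hqH⟩
    refine ⟨hyD, hyφ, ?_⟩
    rw [hFdef, hHdef]
    simp only
    linarith
  -- bounds
  have hKy : ∀ q ∈ K, ‖q.1 - x‖ ≤ R := by
    intro q hq
    obtain ⟨hyD, hyφ, hFH⟩ := hKfacts q hq
    exact hR q.1 hyD (le_trans hFH hq.2)
  set tlb := (u - ‖ℓ‖ * (R + ‖x‖)) / β with htlbdef
  set tub := H₀ - (f x - ‖f' x‖ * R - |L| / 2 * R ^ 2) with htubdef
  have hKt : ∀ q ∈ K, q.2 ∈ Set.Icc tlb tub := by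
    rintro ⟨y, t⟩ hq
    obtain ⟨hyD, hyφ, hFH⟩ := hKfacts _ hq
    have hr := hKy _ hq
    have hq2 : H (y, t) ≤ H₀ := hq.2
    rw [hHdef] at hq2
    simp only at hq2
    simp only at hyφ hr ⊢
    have hφy := hφlb y hyD
    clear_value F S K R tlb tub κ B C0 H H₀ β
    clear hq hKfacts hKy hFlb hR hφlb hminor hℓS hℓpt hsplit hℓbd hpt hKclosed hK0 hHc hfc
      hφconv hφclosed hFdef hSdef hKdef hH₀F
    have hrnn : (0:ℝ) ≤ ‖y - x‖ := norm_nonneg _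
    constructor
    · -- lower bound
      have h2 : tlb ≤ (u - ‖ℓ‖ * (‖y - x‖ + ‖x‖)) / β := by
        rw [htlbdef]
        gcongr
      exact le_trans (le_trans h2 hφy) hyφ
    · -- upper bound
      have hdesc := (abs_le.1 (descent_lemma f f' hf L hLip x y)).1
      have hin : -(‖f' x‖ * ‖y - x‖) ≤ ⟪f' x, y - x⟫ := by
        have := (abs_le.1 (abs_real_inner_le_norm (f' x) (y - x))).1
        linarith
      have hflb : f x - ‖f' x‖ * R - |L| / 2 * R ^ 2 ≤ f y := by
        have hr2 : ‖y - x‖ ^ 2 ≤ R ^ 2 := by nlinarith [hr, hrnn]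
        have e1 : L / 2 * ‖y - x‖ ^ 2 ≤ |L| / 2 * R ^ 2 := by
          have h5 : L / 2 * ‖y - x‖ ^ 2 ≤ |L| / 2 * ‖y - x‖ ^ 2 :=
            mul_le_mul_of_nonneg_right (by linarith [le_abs_self L]) (sq_nonneg _)
          have h6 : |L| / 2 * ‖y - x‖ ^ 2 ≤ |L| / 2 * R ^ 2 :=
            mul_le_mul_of_nonneg_left hr2 (by positivity)
          linarith
        have hfR : ‖f' x‖ * ‖y - x‖ ≤ ‖f' x‖ * R := mul_le_mul_of_nonneg_left hr (norm_nonneg _)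
        linarith [hdesc, hin, hfR, e1]
      have hM : 0 ≤ (1 / 2 : ℝ) * ⟪y - x, M (y - x)⟫ := by
        have := hMpsd (y - x)
        rw [real_inner_comm] at this
        linarith
      have hnn2 : 0 ≤ ‖y - x‖ ^ 2 / (2 * α) := by positivity
      rw [htubdef]
      linarith
  have hKsub : K ⊆ Metric.closedBall x R ×ˢ Set.Icc tlb tub := by
    rintro ⟨y, t⟩ hq
    rw [Set.mem_prod]
    refine ⟨?_, hKt _ hq⟩
    rw [Metric.mem_closedBall, dist_eq_norm]
    exact hKy _ hq
  have hKcompact : IsCompact K :=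
    ((isCompact_closedBall x R).prod isCompact_Icc).of_isClosed_subset hKclosed hKsub
  obtain ⟨q, hqK, hqmin⟩ := hKcompact.exists_isMinOn ⟨_, hK0⟩ hHc.continuousOn
  refine ⟨q.1, (hKfacts q hqK).1, ?_⟩
  intro y hyD
  simp only [Set.mem_setOf_eq]
  have hFq : F q.1 ≤ H q := (hKfacts q hqK).2.2
  have hFy : F y = H (y, φ y) := rfl
  by_cases hcase : H (y, φ y) ≤ H₀
  · have hmem : ((y, φ y) : EuclideanSpace ℝ (Fin n) × ℝ) ∈ K := ⟨⟨hyD, le_refl _⟩, hcase⟩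
    have := hqmin hmem
    calc F q.1 ≤ H q := hFq
      _ ≤ H (y, φ y) := this
      _ = F y := rfl
  · push_neg at hcase
    have hq2 : H q ≤ H₀ := hqK.2
    calc F q.1 ≤ H q := hFq
      _ ≤ H₀ := hq2
      _ ≤ H (y, φ y) := hcase.le
      _ = F y := rfl

end prox_aux

set_option maxHeartbeats 1000000 in
/-- **The proximal step dominates the natural residual.**
Let `f : ℝⁿ → ℝ` be `L`-smooth (gradient `f'`), `φ` proper, closed and convex (domain `D`,
real values `φ` on `D`, closed epigraph, prox operator `P` at scale `α` given by its
minimization property), `M` symmetric psd with `‖M‖ ≤ M̄`, and fix `x ∈ ℝⁿ`, `α ∈ (0,1]`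
with `α (L + M̄) < 1`.  Then the proximal point
`x̄ := argmin_y (f y + φ y + ½⟪y − x, M (y − x)⟫ + ‖y − x‖²/(2α))` is well defined
(exists and is unique) and every such minimizer satisfies
`‖x̄ − x‖ ≥ (1 − (L + M̄) α) ‖F_natᵅ x‖` with `F_natᵅ x := x − P (x − α ∇f x)`. -/
theorem prox_step_dominates_residual (n : ℕ) (L Mbar α : ℝ)
    (f : EuclideanSpace ℝ (Fin n) → ℝ)
    (f' : EuclideanSpace ℝ (Fin n) → EuclideanSpace ℝ (Fin n))
    (hf : ∀ y, HasGradientAt f (f' y) y)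
    (hLip : ∀ y z, ‖f' y - f' z‖ ≤ L * ‖y - z‖)
    (D : Set (EuclideanSpace ℝ (Fin n))) (φ : EuclideanSpace ℝ (Fin n) → ℝ)
    (hD : D.Nonempty) (hφconv : ConvexOn ℝ D φ)
    (hφclosed : IsClosed {q : EuclideanSpace ℝ (Fin n) × ℝ | q.1 ∈ D ∧ φ q.1 ≤ q.2})
    (P : EuclideanSpace ℝ (Fin n) → EuclideanSpace ℝ (Fin n))
    (hP : ∀ y, P y ∈ D ∧ ∀ u ∈ D,
      α * φ (P y) + ‖y - P y‖ ^ 2 / 2 ≤ α * φ u + ‖y - u‖ ^ 2 / 2)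
    (M : EuclideanSpace ℝ (Fin n) →L[ℝ] EuclideanSpace ℝ (Fin n))
    (hMsym : IsSelfAdjoint M) (hMpsd : ∀ y, 0 ≤ ⟪M y, y⟫) (hMnorm : ‖M‖ ≤ Mbar)
    (x : EuclideanSpace ℝ (Fin n)) (hα0 : 0 < α) (hα1 : α ≤ 1)
    (hαLM : α * (L + Mbar) < 1) :
    (∃! xbar : EuclideanSpace ℝ (Fin n), xbar ∈ D ∧
      IsMinOn (fun y => f y + φ y + (1 / 2) * ⟪y - x, M (y - x)⟫
        + ‖y - x‖ ^ 2 / (2 * α)) D xbar) ∧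
    (∀ xbar : EuclideanSpace ℝ (Fin n), xbar ∈ D →
      IsMinOn (fun y => f y + φ y + (1 / 2) * ⟪y - x, M (y - x)⟫
        + ‖y - x‖ ^ 2 / (2 * α)) D xbar →
      (1 - (L + Mbar) * α) * ‖x - P (x - α • f' x)‖ ≤ ‖xbar - x‖) := by
  have hMbar0 : 0 ≤ Mbar := le_trans (norm_nonneg M) hMnorm
  have hαL : α * L < 1 := by nlinarith [mul_nonneg hα0.le hMbar0]
  constructor
  · obtain ⟨xb, hxbD, hxbmin⟩ :=
      min_exists L α f f' hf hLip D φ hD hφconv hφclosed M hMpsd x hα0 hαL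
    exact ⟨xb, ⟨hxbD, hxbmin⟩, fun y hy =>
      min_unique L Mbar α f f' hf hLip D φ hφconv M hMpsd x hα0 hαL y xb hy.1 hxbD hy.2 hxbmin⟩
  · intro xbar hxD hmin
    set z₁ := x - α • f' x with hz₁
    set p := P z₁ with hp
    obtain ⟨hpD, hpmin⟩ := hP z₁
    -- strong prox inequality for p
    have hineq1 : ⟪z₁ - p, xbar - p⟫ ≤ α * (φ xbar - φ p) :=
      prox_var_ineq α hα0 D φ hφconv z₁ p hpD hpmin xbar hxD
    -- variational inequality for xbar
    have hineq2 : φ xbar - φ p ≤ ⟪f' xbar + M (xbar - x) + (1 / α) • (xbar - x), p - xbar⟫ :=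
      minimizer_var_ineq L Mbar α f f' hf hLip D φ hφconv M hMsym hMnorm x hα0 xbar hxD hmin p hpD
    set a := xbar - x with ha
    set G := f' xbar + M a + (1 / α) • a with hG
    set w := xbar - p with hw
    -- combine: ‖w‖² ≤ ⟪z₂ - z₁, w⟫ where z₁ - z₂ - (p - xbar) appears
    have hcomb : ‖w‖ ^ 2 ≤ ⟪α • (f' x - f' xbar - M a), w⟫ := by
      have h2' : α * (φ xbar - φ p) ≤ α * ⟪G, p - xbar⟫ :=
        mul_le_mul_of_nonneg_left hineq2 hα0.le
      have key : ⟪z₁ - p, w⟫ ≤ α * ⟪G, p - xbar⟫ := le_trans hineq1 h2'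
      have e1 : α * ⟪G, p - xbar⟫ = -⟪α • G, w⟫ := by
        rw [real_inner_smul_left]
        have hpw : (p - xbar) = -w := by rw [hw]; abel
        rw [hpw, inner_neg_right]
        ring
      rw [e1] at key
      have hkey : ⟪z₁ - p, w⟫ + ⟪α • G, w⟫ ≤ 0 := by linarith
      have e2 : z₁ - p + α • G = w + α • (f' xbar - f' x + M a) := by
        rw [hz₁, hG, hw, ha]
        simp only [smul_add, smul_sub, smul_smul]
        rw [mul_one_div, div_self (ne_of_gt hα0)]
        module
      rw [← inner_add_left, e2, inner_add_left, real_inner_self_eq_norm_sq] at hkey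
      have h4 : ⟪α • (f' x - f' xbar - M a), w⟫ = -⟪α • (f' xbar - f' x + M a), w⟫ := by
        rw [← inner_neg_left]; congr 1; module
      linarith [hkey, h4.ge, h4.le]
    have hnv : ‖α • (f' x - f' xbar - M a)‖ ≤ α * ((L + Mbar) * ‖a‖) := by
      rw [norm_smul, Real.norm_eq_abs, abs_of_pos hα0]
      apply mul_le_mul_of_nonneg_left _ hα0.le
      calc ‖f' x - f' xbar - M a‖ ≤ ‖f' x - f' xbar‖ + ‖M a‖ := norm_sub_le _ _
        _ ≤ L * ‖x - xbar‖ + ‖M‖ * ‖a‖ := add_le_add (hLip x xbar) (M.le_opNorm a)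
        _ ≤ (L + Mbar) * ‖a‖ := by
            have hna : ‖x - xbar‖ = ‖a‖ := by rw [ha, norm_sub_rev]
            rw [hna]
            nlinarith [norm_nonneg a, norm_nonneg (M a), (M.le_opNorm a).trans
              (mul_le_mul_of_nonneg_right hMnorm (norm_nonneg a))]
    have hwle : ‖w‖ ≤ α * ((L + Mbar) * ‖a‖) := by
      have hcs : ⟪α • (f' x - f' xbar - M a), w⟫ ≤ ‖α • (f' x - f' xbar - M a)‖ * ‖w‖ :=
        real_inner_le_norm _ _
      nlinarith [hcomb, hcs, norm_nonneg w, norm_nonneg (α • (f' x - f' xbar - M a)),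
        mul_le_mul_of_nonneg_right hnv (norm_nonneg w)]
    have htri : ‖x - p‖ ≤ ‖a‖ + ‖w‖ := by
      have hxp : x - p = -a + w := by rw [ha, hw]; abel
      rw [hxp]
      calc ‖-a + w‖ ≤ ‖-a‖ + ‖w‖ := norm_add_le _ _
        _ = ‖a‖ + ‖w‖ := by rw [norm_neg]
    have hax : ‖xbar - x‖ = ‖a‖ := by rw [ha]
    rw [hax]
    have hc1 : (L + Mbar) * α < 1 := by linarith [hαLM, mul_comm α (L + Mbar) ▸ hαLM]
    have h1c : (0:ℝ) ≤ 1 - (L + Mbar) * α := by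
      nlinarith [hc1]
    have hN : ‖x - p‖ ≤ ‖a‖ + (L + Mbar) * α * ‖a‖ := by
      have : α * ((L + Mbar) * ‖a‖) = (L + Mbar) * α * ‖a‖ := by ring
      linarith [htri, hwle, this.le, this.ge]
    set c := (L + Mbar) * α with hcdef
    set A := ‖a‖ with hA
    set N := ‖x - p‖ with hNN
    have h2 := mul_le_mul_of_nonneg_left hN h1c
    have h3 : (1 - c) * (A + c * A) ≤ A := by
      have he : (1 - c) * (A + c * A) = A - c * c * A := by ring
      have hcc : 0 ≤ c * c * A := mul_nonneg (mul_self_nonneg c) (norm_nonneg a)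
      linarith
    linarith
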